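/- Let R ∈ ℝ^{N×m} be the incidence matrix of a graph (each column of R has exactly one entry +1, one entry −1, and zeros elsewhere, and distinct columns correspond to distinct edges), let Γ = diag(γ_1,…,γ_m) with γ_k > 0, and let Σ = diag(σ_1,…,σ_N) with σ_i > 0. If σ_i ≥ 2(RΓRᵀ)_{ii} for every node i, then the matrix Γ^{-1} − RᵀΣ^{-1}R is positive semidefinite. -/

import Mathlib

open Matrix

/-- for the incidence matrix `R` of a graph, positive edge weights
`Γ = diag(γ)` and `Σ = diag(σ)` with `σᵢ ≥ 2(RΓRᵀ)ᵢᵢ`, the matrix `Γ⁻¹ − RᵀΣ⁻¹R` is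
positive semidefinite. -/
theorem incidence_weight_bound_posSemidef {N m : ℕ}
    (R : Matrix (Fin N) (Fin m) ℝ) (γ : Fin m → ℝ) (σ : Fin N → ℝ)
    (hγ : ∀ k, 0 < γ k) (hσ : ∀ i, 0 < σ i)
    (hinc : ∀ k : Fin m, ∃ i j : Fin N, i ≠ j ∧ R i k = 1 ∧ R j k = -1 ∧
      ∀ l : Fin N, l ≠ i → l ≠ j → R l k = 0)
    (hdist : ∀ k₁ k₂ : Fin m, (∀ i, R i k₁ = R i k₂) → k₁ = k₂)
    (hbound : ∀ i, 2 * (R * Matrix.diagonal γ * Rᵀ) i i ≤ σ i) :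
    (Matrix.diagonal (fun k => (γ k)⁻¹) -
        Rᵀ * Matrix.diagonal (fun i => (σ i)⁻¹) * R).PosSemidef := by
  -- entries of R lie in {0, 1, -1}
  have hval : ∀ i k, R i k = 0 ∨ R i k = 1 ∨ R i k = -1 := by
    intro i k
    obtain ⟨a, b, hab, ha, hb, h0⟩ := hinc k
    by_cases hia : i = a
    · subst hia; exact Or.inr (Or.inl ha)
    by_cases hib : i = b
    · subst hib; exact Or.inr (Or.inr hb)
    · exact Or.inl (h0 i hia hib)
  have hsq : ∀ i k, R i k ^ 2 * R i k ^ 2 = R i k ^ 2 := by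
    intro i k; rcases hval i k with h | h | h <;> rw [h] <;> norm_num
  have hcube : ∀ i k, R i k ^ 2 * R i k = R i k := by
    intro i k; rcases hval i k with h | h | h <;> rw [h] <;> norm_num
  -- each column of R has squared sum 2
  have hcolsum : ∀ k, ∑ i, R i k ^ 2 = 2 := by
    intro k
    obtain ⟨a, b, hab, ha, hb, h0⟩ := hinc k
    have hfun : ∀ l, R l k ^ 2 = (if l = a then (1 : ℝ) else 0) + (if l = b then 1 else 0) := by
      intro l
      by_cases hla : l = a
      · subst hla
        have : ¬ (l = b) := fun h => hab h
        simp [ha, this]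
      by_cases hlb : l = b
      · subst hlb; simp [hb, hla]
      · simp [h0 l hla hlb, hla, hlb]
    simp only [hfun, Finset.sum_add_distrib, Finset.sum_ite_eq', Finset.mem_univ, if_true]
    norm_num
  have hdiag : ∀ i, (R * Matrix.diagonal γ * Rᵀ) i i = ∑ k, R i k ^ 2 * γ k := by
    intro i
    simp only [Matrix.mul_apply, Matrix.diagonal_apply, Matrix.transpose_apply, mul_ite,
      mul_zero, Finset.sum_ite_eq', Finset.mem_univ, if_true]
    exact Finset.sum_congr rfl fun k _ => by ring
  refine Matrix.posSemidef_iff_dotProduct_mulVec.2 ⟨?_, ?_⟩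
  · -- Hermitian
    apply Matrix.IsHermitian.sub (Matrix.isHermitian_diagonal _)
    rw [show Rᵀ = Rᴴ from (Matrix.conjTranspose_eq_transpose_of_trivial R).symm]
    exact Matrix.isHermitian_conjTranspose_mul_mul R (Matrix.isHermitian_diagonal _)
  · intro x
    have sqrtne : ∀ k, Real.sqrt (γ k) ≠ 0 := fun k => (Real.sqrt_pos.2 (hγ k)).ne'
    have lhsEq : star x ⬝ᵥ ((Matrix.diagonal (fun k => (γ k)⁻¹) -
        Rᵀ * Matrix.diagonal (fun i => (σ i)⁻¹) * R) *ᵥ x)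
        = (∑ k, x k * ((γ k)⁻¹ * x k)) -
          ∑ i, (R *ᵥ x) i * ((σ i)⁻¹ * (R *ᵥ x) i) := by
      rw [star_trivial, Matrix.sub_mulVec, dotProduct_sub]
      congr 1
      · simp [dotProduct, Matrix.mulVec_diagonal]
      · rw [Matrix.mul_assoc, ← Matrix.mulVec_mulVec, ← Matrix.mulVec_mulVec,
          Matrix.dotProduct_mulVec, Matrix.vecMul_transpose]
        simp [dotProduct, Matrix.mulVec_diagonal]
    rw [lhsEq, sub_nonneg]
    -- per node Cauchy-Schwarz
    have hCS : ∀ i, ((R *ᵥ x) i) ^ 2 ≤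
        (∑ k, R i k ^ 2 * γ k) * (∑ k, R i k ^ 2 * (x k ^ 2 / γ k)) := by
      intro i
      have cs := Finset.sum_mul_sq_le_sq_mul_sq Finset.univ
        (fun k => R i k * Real.sqrt (γ k)) (fun k => R i k ^ 2 * x k / Real.sqrt (γ k))
      have e1 : (R *ᵥ x) i = ∑ k, (R i k * Real.sqrt (γ k)) *
          (R i k ^ 2 * x k / Real.sqrt (γ k)) := by
        rw [Matrix.mulVec, dotProduct]
        refine Finset.sum_congr rfl fun k _ => ?_
        have : (R i k * Real.sqrt (γ k)) * (R i k ^ 2 * x k / Real.sqrt (γ k))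
            = (R i k ^ 2 * R i k) * x k * (Real.sqrt (γ k) / Real.sqrt (γ k)) := by ring
        rw [this, div_self (sqrtne k), hcube, mul_one]
      have e2 : ∑ k, (R i k * Real.sqrt (γ k)) ^ 2 = ∑ k, R i k ^ 2 * γ k :=
        Finset.sum_congr rfl fun k _ => by
          rw [mul_pow, Real.sq_sqrt (hγ k).le]
      have e3 : ∑ k, (R i k ^ 2 * x k / Real.sqrt (γ k)) ^ 2
          = ∑ k, R i k ^ 2 * (x k ^ 2 / γ k) :=
        Finset.sum_congr rfl fun k _ => by
          rw [div_pow, mul_pow, Real.sq_sqrt (hγ k).le, sq (R i k ^ 2), hsq]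
          ring
      rw [e1]
      calc (∑ k, (R i k * Real.sqrt (γ k)) * (R i k ^ 2 * x k / Real.sqrt (γ k))) ^ 2
          ≤ (∑ k, (R i k * Real.sqrt (γ k)) ^ 2) *
            ∑ k, (R i k ^ 2 * x k / Real.sqrt (γ k)) ^ 2 := cs
        _ = _ := by rw [e2, e3]
    have hSnonneg : ∀ i, (0:ℝ) ≤ ∑ k, R i k ^ 2 * (x k ^ 2 / γ k) :=
      fun i => Finset.sum_nonneg fun k _ =>
        mul_nonneg (sq_nonneg _) (div_nonneg (sq_nonneg _) (hγ k).le)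
    have hi : ∀ i, (R *ᵥ x) i * ((σ i)⁻¹ * (R *ᵥ x) i)
        ≤ ∑ k, R i k ^ 2 * (x k ^ 2 / γ k) / 2 := by
      intro i
      have h1 : (R *ᵥ x) i * ((σ i)⁻¹ * (R *ᵥ x) i) = (σ i)⁻¹ * ((R *ᵥ x) i) ^ 2 := by ring
      rw [h1, ← Finset.sum_div]
      have hA : (∑ k, R i k ^ 2 * γ k) ≤ σ i / 2 := by
        have := hbound i
        rw [hdiag i] at this
        linarith
      have h2 : ((R *ᵥ x) i) ^ 2 ≤ (σ i / 2) * (∑ k, R i k ^ 2 * (x k ^ 2 / γ k)) :=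
        (hCS i).trans (mul_le_mul_of_nonneg_right hA (hSnonneg i))
      have h3 : (σ i)⁻¹ * ((R *ᵥ x) i) ^ 2
          ≤ (σ i)⁻¹ * ((σ i / 2) * (∑ k, R i k ^ 2 * (x k ^ 2 / γ k))) :=
        mul_le_mul_of_nonneg_left h2 (inv_nonneg.2 (hσ i).le)
      refine h3.trans (le_of_eq ?_)
      rw [show (σ i)⁻¹ * (σ i / 2 * ∑ k, R i k ^ 2 * (x k ^ 2 / γ k))
          = (σ i)⁻¹ * σ i * ((∑ k, R i k ^ 2 * (x k ^ 2 / γ k)) / 2) by ring,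
        inv_mul_cancel₀ (hσ i).ne', one_mul]
    calc ∑ i, (R *ᵥ x) i * ((σ i)⁻¹ * (R *ᵥ x) i)
        ≤ ∑ i, ∑ k, R i k ^ 2 * (x k ^ 2 / γ k) / 2 :=
          Finset.sum_le_sum fun i _ => hi i
      _ = ∑ k, (x k ^ 2 / γ k) / 2 * ∑ i, R i k ^ 2 := by
          rw [Finset.sum_comm]
          exact Finset.sum_congr rfl fun k _ => by
            rw [Finset.mul_sum]
            exact Finset.sum_congr rfl fun i _ => by ring
      _ = ∑ k, x k * ((γ k)⁻¹ * x k) := by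
          refine Finset.sum_congr rfl fun k _ => ?_
          rw [hcolsum k]
          field_simp
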